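/- Let R be a ring and G a finite group of order n with a fixed listing g_1, …, g_n of its elements. The map σ sending w = Σ_{g∈G} α_g g in the group ring RG to the n×n matrix over R whose (i,j) entry is α_{g_i⁻¹ g_j} is an injective ring homomorphism, and its image is exactly the set of RG-matrices, i.e. the set of n×n matrices A over R for which there exists a function f : G → R with A_{ij} = f(g_i⁻¹ g_j) for all i, j. -/

import Mathlib

/-- The `RG`-matrix of an element `w` of the group ring `RG`, relative to a
listing `g : Fin n ≃ G` of the elements of `G`: its `(i,j)` entry is the
coefficient of `(g i)⁻¹ * g j` in `w`. -/
noncomputable def rgMatrix {R : Type*} [Semiring R] {G : Type*} [Group G] {n : ℕ}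
    (g : Fin n ≃ G) (w : MonoidAlgebra R G) : Matrix (Fin n) (Fin n) R :=
  Matrix.of fun i j => w.coeff ((g i)⁻¹ * g j)

theorem mul_apply_fin {R : Type*} [Ring R] {G : Type*} [Group G] [Fintype G]
    (w v : MonoidAlgebra R G) (x : G) :
    (w * v).coeff x = ∑ a : G, w.coeff a * v.coeff (a⁻¹ * x) := by
  rw [MonoidAlgebra.mul_apply_left, Finsupp.sum_fintype]
  intro a; simp

/-- the map `σ = rgMatrix g` is an injective ring homomorphism from the
group ring `RG` to the `n × n` matrices over `R`, whose image is exactly the set of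
`RG`-matrices, i.e. the matrices `A` for which there is `f : G → R` with
`A i j = f ((g i)⁻¹ * g j)`. -/
theorem stmt0 {R : Type*} [Ring R] {G : Type*} [Group G] {n : ℕ}
    (g : Fin n ≃ G) :
    ∃ σ : MonoidAlgebra R G →+* Matrix (Fin n) (Fin n) R,
      (∀ w : MonoidAlgebra R G, σ w = rgMatrix g w) ∧
      Function.Injective σ ∧
      Set.range σ =
        {A : Matrix (Fin n) (Fin n) R | ∃ f : G → R, ∀ i j, A i j = f ((g i)⁻¹ * g j)} := by
  haveI : Fintype G := Fintype.ofEquiv (Fin n) g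
  refine ⟨{ toFun := rgMatrix g
            map_one' := ?_
            map_mul' := ?_
            map_zero' := ?_
            map_add' := ?_ }, fun w => rfl, ?_, ?_⟩
  · ext i j
    simp only [rgMatrix, Matrix.of_apply, Matrix.one_apply, MonoidAlgebra.one_def,
      MonoidAlgebra.single_apply]
    by_cases h : i = j
    · subst h; simp
    · rw [if_neg h, MonoidAlgebra.coeff_single, Finsupp.single_eq_of_ne']
      intro hc
      exact h (g.injective (by rw [← inv_mul_eq_one, ← hc]))
  · intro w v
    ext i j
    simp only [rgMatrix, Matrix.of_apply, Matrix.mul_apply]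
    rw [mul_apply_fin]
    refine Fintype.sum_equiv ((Equiv.mulLeft (g i)).trans g.symm) _ _ fun a => ?_
    simp [mul_assoc]
  · ext i j; simp [rgMatrix]
  · intro w v; ext i j; exact Finsupp.add_apply w.coeff v.coeff _
  · intro w v h
    ext x
    have := congrFun (congrFun h (g.symm 1)) (g.symm x)
    simpa [rgMatrix] using this
  · ext A
    constructor
    · rintro ⟨w, rfl⟩
      exact ⟨fun x => w.coeff x, fun i j => rfl⟩
    · rintro ⟨f, hf⟩
      refine ⟨MonoidAlgebra.ofCoeff (Finsupp.equivFunOnFinite.symm f), ?_⟩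
      ext i j
      simp [rgMatrix, hf i j]
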